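/- arXiv:2511.19828 — 3 statements merged into one kernel-verified Lean document; each statement's English description precedes it below -/
import Mathlib

section
/- Let S_X, S_Y be finite nonempty sets, φ : S_X × S_Y → ℝ extended linearly to mixed actions, λ ∈ (0,1), and suppose τ⁺, τ⁻ ∈ Δ(S_X) satisfy the two-point inequalities with strict separation m⁺ := min_{s_Y} φ(τ⁺,s_Y) > M⁻ := max_{s_Y} φ(τ⁻,s_Y). Then λ ≥ 1 − (m⁺ − M⁻) / max{ M⁺ − M⁻, m⁺ − m⁻ }, where M⁺ := max_{s_Y} φ(τ⁺,s_Y) and m⁻ := min_{s_Y} φ(τ⁻,s_Y). -/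
noncomputable def maxY {SY : Type*} [Fintype SY] [Nonempty SY] (f : SY → ℝ) : ℝ :=
  Finset.univ.sup' Finset.univ_nonempty f

noncomputable def minY {SY : Type*} [Fintype SY] [Nonempty SY] (f : SY → ℝ) : ℝ :=
  Finset.univ.inf' Finset.univ_nonempty f

def simplex (SX : Type*) [Fintype SX] : Set (SX → ℝ) :=
  {τ | (∀ s, 0 ≤ τ s) ∧ ∑ s, τ s = 1}

noncomputable def mix {SX SY : Type*} [Fintype SX] (φ : SX → SY → ℝ) (τ : SX → ℝ)
    (sY : SY) : ℝ :=
  ∑ s, τ s * φ s sY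

/-- lower bound on the discount factor from the two-point inequalities
with strict separation. -/
theorem stmt_3 {SX SY : Type*} [Fintype SX] [Fintype SY] [Nonempty SX] [Nonempty SY]
    (φ : SX → SY → ℝ) (lam : ℝ) (h0 : 0 < lam) (h1 : lam < 1)
    (τp τm : SX → ℝ) (hτp : τp ∈ simplex SX) (hτm : τm ∈ simplex SX)
    (hsep : minY (mix φ τp) > maxY (mix φ τm))
    (hi : minY (mix φ τp) ≥ (1 - lam) * maxY (mix φ τp) + lam * maxY (mix φ τm))
    (hii : maxY (mix φ τm) ≤ lam * minY (mix φ τp) + (1 - lam) * minY (mix φ τm)) :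
    lam ≥ 1 - (minY (mix φ τp) - maxY (mix φ τm)) /
      max (maxY (mix φ τp) - maxY (mix φ τm)) (minY (mix φ τp) - minY (mix φ τm)) := by
  set mp := minY (mix φ τp)
  set Mp := maxY (mix φ τp)
  set mm := minY (mix φ τm)
  set Mm := maxY (mix φ τm)
  have hmMp : mp ≤ Mp := le_trans (Finset.inf'_le _ (Finset.mem_univ (Classical.arbitrary SY))) (Finset.le_sup' _ (Finset.mem_univ (Classical.arbitrary SY)))
  have hD : (0:ℝ) < max (Mp - Mm) (mp - mm) :=
    lt_of_lt_of_le (by linarith) (le_max_left _ _)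
  rw [ge_iff_le, sub_le_iff_le_add, ← sub_le_iff_le_add', le_div_iff₀ hD]
  rcases max_cases (Mp - Mm) (mp - mm) with ⟨h, _⟩ | ⟨h, _⟩ <;> rw [h] <;> nlinarith
end

section
/- Let S_X, S_Y be finite sets and suppose φ : S_X × S_Y → ℝ is additive: φ(s_X, s_Y) = φ_X(s_X) + φ_Y(s_Y). Let λ ∈ [0,1), σ⁰ ∈ Δ(S_X), and for each s_Y let σ[s_Y] ∈ Δ(S_X) satisfy φ_Y(s_Y) = −λ·E_{s∼σ[s_Y]}[φ_X(s)] − (1−λ)·E_{s∼σ⁰}[φ_X(s)]. Then for any sequence (s_Y^t)_{t≥0} in S_Y, the strategy playing σ⁰ at round 0 and σ[s_Y^{t−1}] at round t ≥ 1 satisfies (1−λ)·∑_{t=0}^∞ λ^t φ(τ^t, s_Y^t) = 0, where τ^0 = σ⁰ and τ^t = σ[s_Y^{t−1}], and φ(τ, s_Y) := E_{s∼τ}[φ(s, s_Y)]. -/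
/-- for additive φ, the pointwise next-round correction condition for a
reactive strategy enforces the discounted constraint against every exogenous sequence. -/
theorem stmt_8 {SX SY : Type*} [Fintype SX] [Nonempty SX]
    (φX : SX → ℝ) (φY : SY → ℝ) (lam : ℝ) (h0 : 0 ≤ lam) (h1 : lam < 1)
    (σ0 : SX → ℝ) (hσ0 : σ0 ∈ simplex SX)
    (σ : SY → SX → ℝ) (hσ : ∀ sY, σ sY ∈ simplex SX)
    (hcond : ∀ sY, φY sY =
      -lam * (∑ s, σ sY s * φX s) - (1 - lam) * (∑ s, σ0 s * φX s))
    (sY : ℕ → SY) (τ : ℕ → SX → ℝ) (hτ0 : τ 0 = σ0) (hτ : ∀ t, τ (t + 1) = σ (sY t)) :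
    HasSum (fun t : ℕ => (1 - lam) * (lam ^ t * ∑ s, τ t s * (φX s + φY (sY t)))) 0 := by
  set E : ℕ → ℝ := fun t => ∑ s, τ t s * φX s with hE
  set f : ℕ → ℝ := fun t => lam ^ t * E t with hf
  have hmem : ∀ t, τ t ∈ simplex SX := by
    intro t
    cases t with
    | zero => rw [hτ0]; exact hσ0
    | succ n => rw [hτ n]; exact hσ (sY n)
  set C : ℝ := ∑ s, |φX s| with hC
  have hEb : ∀ t, |E t| ≤ C := by
    intro t
    obtain ⟨hpos, hsum⟩ := hmem t
    calc |E t| ≤ ∑ s, |τ t s * φX s| := Finset.abs_sum_le_sum_abs _ _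
    _ ≤ ∑ s, |φX s| := by
        apply Finset.sum_le_sum
        intro s _
        rw [abs_mul, abs_of_nonneg (hpos s)]
        have hle1 : τ t s ≤ 1 := by
          rw [← hsum]
          exact Finset.single_le_sum (fun i _ => hpos i) (Finset.mem_univ s)
        nlinarith [abs_nonneg (φX s)]
  have hfb : ∀ t, ‖f t‖ ≤ C * lam ^ t := by
    intro t
    simp only [hf, Real.norm_eq_abs, abs_mul, abs_pow, abs_of_nonneg h0]
    rw [mul_comm]
    exact mul_le_mul_of_nonneg_right (hEb t) (pow_nonneg h0 t)
  have hgeo : Summable (fun t : ℕ => C * lam ^ t) :=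
    (summable_geometric_of_lt_one h0 h1).mul_left C
  have hfs : Summable f := Summable.of_norm_bounded hgeo hfb
  have hfs' : Summable (fun t => f (t + 1)) := (summable_nat_add_iff 1).2 hfs
  have hft : Filter.Tendsto f Filter.atTop (nhds 0) := by
    apply squeeze_zero_norm hfb
    rw [show (0:ℝ) = C * 0 by ring]
    exact (tendsto_pow_atTop_nhds_zero_of_lt_one h0 h1).const_mul C
  -- telescoping sum
  have hds : Summable (fun t => f t - f (t + 1)) := hfs.sub hfs'
  have htele : HasSum (fun t => f t - f (t + 1)) (f 0) := by
    have h := hds.hasSum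
    have hpart := h.tendsto_sum_nat
    have heq : ∀ n, ∑ i ∈ Finset.range n, (f i - f (i + 1)) = f 0 - f n := by
      intro n; exact Finset.sum_range_sub' f n
    have hlim : Filter.Tendsto (fun n => ∑ i ∈ Finset.range n, (f i - f (i + 1)))
        Filter.atTop (nhds (f 0)) := by
      simp only [heq]
      have := Filter.Tendsto.const_sub (f 0) hft
      simpa using this
    have := tendsto_nhds_unique hpart hlim
    rwa [this] at h
  have hgeoE : HasSum (fun t : ℕ => (1 - lam) ^ 2 * lam ^ t * E 0)
      ((1 - lam) * E 0) := by
    have h := (hasSum_geometric_of_lt_one h0 h1).mul_left ((1 - lam) ^ 2)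
    have h2 := h.mul_right (E 0)
    have hne : (1 : ℝ) - lam ≠ 0 := by linarith
    have key : (1 - lam) ^ 2 * (1 - lam)⁻¹ * E 0 = (1 - lam) * E 0 := by
      field_simp
    rwa [key] at h2
  have hmain := (htele.mul_left (1 - lam)).sub hgeoE
  have hval : (1 - lam) * f 0 - (1 - lam) * E 0 = 0 := by
    simp only [hf, pow_zero, one_mul]
    ring
  rw [hval] at hmain
  convert hmain using 1
  · rfl
  funext t
  have hsum1 : ∑ s, τ t s = 1 := (hmem t).2
  have hexp : ∑ s, τ t s * (φX s + φY (sY t)) = E t + φY (sY t) := by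
    simp only [mul_add, Finset.sum_add_distrib, ← Finset.sum_mul, hsum1, one_mul, hE]
  have hphiY : φY (sY t) = -lam * E (t + 1) - (1 - lam) * E 0 := by
    rw [hcond (sY t)]
    simp only [hE, hτ t, hτ0]
  rw [hexp, hphiY]
  simp only [hf]
  ring
end

section
/- Let S_X, S_Y be finite sets and φ(s_X, s_Y) = φ_X(s_X) + φ_Y(s_Y) be additive with φ_X non-constant. If there exist τ⁺, τ⁻ ∈ Δ(S_X) and λ ∈ [0,1) satisfying the two-point enforcement inequalities for φ, then λ ≥ (max_{s_Y} φ_Y(s_Y) − min_{s_Y} φ_Y(s_Y)) / (max_{s_X} φ_X(s_X) − min_{s_X} φ_X(s_X)). -/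
lemma const_add_inf' {SY : Type*} [Fintype SY] [Nonempty SY] (c : ℝ) (f : SY → ℝ) :
    minY (fun t => c + f t) = c + minY f := by
  unfold minY
  obtain ⟨t, _, ht⟩ := Finset.exists_mem_eq_inf' (Finset.univ_nonempty (α := SY)) f
  apply le_antisymm
  · exact le_trans (Finset.inf'_le _ (Finset.mem_univ t)) (by rw [ht])
  · apply Finset.le_inf'
    intro i _
    have := Finset.inf'_le f (Finset.mem_univ i)
    linarith [this]

lemma const_add_sup' {SY : Type*} [Fintype SY] [Nonempty SY] (c : ℝ) (f : SY → ℝ) :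
    maxY (fun t => c + f t) = c + maxY f := by
  unfold maxY
  obtain ⟨t, _, ht⟩ := Finset.exists_mem_eq_sup' (Finset.univ_nonempty (α := SY)) f
  apply le_antisymm
  · apply Finset.sup'_le
    intro i _
    have := Finset.le_sup' f (Finset.mem_univ i)
    linarith [this]
  · exact le_trans (by rw [ht]) (Finset.le_sup' _ (Finset.mem_univ t))

lemma mix_add {SX SY : Type*} [Fintype SX] (φX : SX → ℝ) (φY : SY → ℝ) (τ : SX → ℝ)
    (hτ : ∑ s, τ s = 1) (t : SY) :
    mix (fun s t => φX s + φY t) τ t = (∑ s, τ s * φX s) + φY t := by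
  simp [mix, mul_add, Finset.sum_add_distrib, ← Finset.sum_mul, hτ]

lemma exp_le_max {SX : Type*} [Fintype SX] [Nonempty SX] (φX : SX → ℝ) (τ : SX → ℝ)
    (h0 : ∀ s, 0 ≤ τ s) (h1 : ∑ s, τ s = 1) :
    (∑ s, τ s * φX s) ≤ maxY φX := by
  calc (∑ s, τ s * φX s) ≤ ∑ s, τ s * maxY φX := by
        apply Finset.sum_le_sum
        intro i _
        exact mul_le_mul_of_nonneg_left (Finset.le_sup' φX (Finset.mem_univ i)) (h0 i)
    _ = maxY φX := by rw [← Finset.sum_mul, h1, one_mul]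

lemma min_le_exp {SX : Type*} [Fintype SX] [Nonempty SX] (φX : SX → ℝ) (τ : SX → ℝ)
    (h0 : ∀ s, 0 ≤ τ s) (h1 : ∑ s, τ s = 1) :
    minY φX ≤ (∑ s, τ s * φX s) := by
  calc minY φX = ∑ s, τ s * minY φX := by rw [← Finset.sum_mul, h1, one_mul]
    _ ≤ ∑ s, τ s * φX s := by
        apply Finset.sum_le_sum
        intro i _
        exact mul_le_mul_of_nonneg_left (Finset.inf'_le φX (Finset.mem_univ i)) (h0 i)

/-- minimum discount factor for additive objective functions. -/
theorem stmt_9 {SX SY : Type*} [Fintype SX] [Fintype SY] [Nonempty SX] [Nonempty SY]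
    (φX : SX → ℝ) (φY : SY → ℝ) (hnc : ∃ a b, φX a ≠ φX b)
    (lam : ℝ) (h0 : 0 ≤ lam) (h1 : lam < 1)
    (τp τm : SX → ℝ) (hτp : τp ∈ simplex SX) (hτm : τm ∈ simplex SX)
    (hi : minY (mix (fun s t => φX s + φY t) τp) ≥
      (1 - lam) * maxY (mix (fun s t => φX s + φY t) τp) +
        lam * maxY (mix (fun s t => φX s + φY t) τm))
    (hii : maxY (mix (fun s t => φX s + φY t) τm) ≤
      lam * minY (mix (fun s t => φX s + φY t) τp) +
        (1 - lam) * minY (mix (fun s t => φX s + φY t) τm)) :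
    lam ≥ (maxY φY - minY φY) / (maxY φX - minY φX) := by
  obtain ⟨hp0, hp1⟩ := hτp
  obtain ⟨hm0, hm1⟩ := hτm
  set a := ∑ s, τp s * φX s with ha
  set b := ∑ s, τm s * φX s with hb
  have hep : mix (fun s t => φX s + φY t) τp = fun t => a + φY t :=
    funext (mix_add φX φY τp hp1)
  have hem : mix (fun s t => φX s + φY t) τm = fun t => b + φY t :=
    funext (mix_add φX φY τm hm1)
  have hmaxp : maxY (mix (fun s t => φX s + φY t) τp) = a + maxY φY := by
    rw [hep, const_add_sup']
  have hminp : minY (mix (fun s t => φX s + φY t) τp) = a + minY φY := by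
    rw [hep, const_add_inf']
  have hmaxm : maxY (mix (fun s t => φX s + φY t) τm) = b + maxY φY := by
    rw [hem, const_add_sup']
  rw [hmaxp, hminp, hmaxm] at hi
  -- key : maxY φY - minY φY ≤ lam * (a - b)
  have hkey : maxY φY - minY φY ≤ lam * (a - b) := by nlinarith [hi]
  -- denominator positive
  obtain ⟨x, y, hxy⟩ := hnc
  have hR : 0 < maxY φX - minY φX := by
    have h1x : minY φX ≤ φX x := Finset.inf'_le φX (Finset.mem_univ x)
    have h1y : minY φX ≤ φX y := Finset.inf'_le φX (Finset.mem_univ y)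
    have h2x : φX x ≤ maxY φX := Finset.le_sup' φX (Finset.mem_univ x)
    have h2y : φX y ≤ maxY φX := Finset.le_sup' φX (Finset.mem_univ y)
    rcases lt_or_ge (minY φX) (maxY φX) with h | h
    · linarith
    · exact absurd (by linarith : φX x = φX y) hxy
  have hab : a - b ≤ maxY φX - minY φX := by
    have := exp_le_max φX τp hp0 hp1
    have := min_le_exp φX τm hm0 hm1
    linarith
  have : maxY φY - minY φY ≤ lam * (maxY φX - minY φX) := by
    calc maxY φY - minY φY ≤ lam * (a - b) := hkey
      _ ≤ lam * (maxY φX - minY φX) := mul_le_mul_of_nonneg_left hab h0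
  rw [ge_iff_le, div_le_iff₀ hR]
  linarith
end
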